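/- For every nonnegative integer α, all real numbers x, y, and every natural number n, ₍B₎E_n^(α)(x;y) = Σ_{j=0}^{n} C(n,j) · ( Σ_{k=0}^{j} (x)_k · S₂(j,k) ) · ₍B₎E_{n−j}^(α)(y), where (x)_k = x(x−1)···(x−k+1) is the falling factorial (with (x)_0 = 1), S₂(j,k) are the Stirling numbers of the second kind, and ₍B₎E_m^(α)(y) := ₍B₎E_m^(α)(0;y). -/

import Mathlib

open PowerSeries Finset

/-- The series `e^{x t}`. -/
noncomputable def expXT (x : ℝ) : PowerSeries ℝ :=
  PowerSeries.rescale x (PowerSeries.exp ℝ)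

/-- The series `e^{y (e^t - 1)} = ∑_{k ≥ 0} y^k (e^t - 1)^k / k!`
(the inner sum is finite in each coefficient since `(e^t - 1)^k` has order `≥ k`). -/
noncomputable def bellSeries (y : ℝ) : PowerSeries ℝ :=
  PowerSeries.mk fun n =>
    ∑ k ∈ Finset.range (n + 1),
      y ^ k * ((k.factorial : ℝ))⁻¹ * PowerSeries.coeff n ((PowerSeries.exp ℝ - 1) ^ k)

/-- The series `(2 / (e^t + 1))^α`. -/
noncomputable def eulerSeries (α : ℕ) : PowerSeries ℝ :=
  (2 * (PowerSeries.exp ℝ + 1)⁻¹) ^ α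

/-- The Bell-based Euler polynomial `₍B₎E_n^(α)(x; y)`:
`n!` times the coefficient of `t^n` in `(2/(e^t+1))^α e^{xt + y(e^t-1)}`. -/
noncomputable def bellEuler (α : ℕ) (x y : ℝ) (n : ℕ) : ℝ :=
  n.factorial * PowerSeries.coeff n (eulerSeries α * expXT x * bellSeries y)

/-- The Stirling number of the second kind `S₂(n,k)`, with
`∑ S₂(n,k) t^n/n! = (e^t - 1)^k / k!`. -/
noncomputable def stirling2 (n k : ℕ) : ℝ :=
  n.factorial *
    PowerSeries.coeff n (((k.factorial : ℝ))⁻¹ • (PowerSeries.exp ℝ - 1) ^ k)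

lemma coeff_exp_real (n : ℕ) : PowerSeries.coeff n (PowerSeries.exp ℝ) = (n.factorial : ℝ)⁻¹ := by
  rw [PowerSeries.coeff_exp]
  simp [eq_ratCast, one_div]

lemma coeff_expXT (x : ℝ) (n : ℕ) :
    PowerSeries.coeff n (expXT x) = x ^ n * (n.factorial : ℝ)⁻¹ := by
  rw [expXT, PowerSeries.coeff_rescale, coeff_exp_real]

lemma expXT_zero : expXT 0 = 1 := by
  rw [expXT, PowerSeries.rescale_zero]
  simp [PowerSeries.constantCoeff_exp]

lemma stirling2_eq (n k : ℕ) :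
    stirling2 n k = (n.factorial : ℝ) * (k.factorial : ℝ)⁻¹ *
      PowerSeries.coeff n ((PowerSeries.exp ℝ - 1) ^ k) := by
  rw [stirling2, map_smul, smul_eq_mul]; ring

lemma coeff_expm1_pow_eq_zero {n k : ℕ} (h : n < k) :
    PowerSeries.coeff n ((PowerSeries.exp ℝ - 1) ^ k) = 0 := by
  obtain ⟨g, hg⟩ : (PowerSeries.X : PowerSeries ℝ) ∣ (PowerSeries.exp ℝ - 1) := by
    rw [PowerSeries.X_dvd_iff]
    simp [PowerSeries.constantCoeff_exp]
  rw [hg, mul_pow, PowerSeries.coeff_X_pow_mul' _ k n, if_neg (by omega)]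

lemma stirling2_eq_zero_of_lt {n k : ℕ} (h : n < k) : stirling2 n k = 0 := by
  rw [stirling2_eq, coeff_expm1_pow_eq_zero h, mul_zero]

lemma stirling2_succ_zero (j : ℕ) : stirling2 (j + 1) 0 = 0 := by
  rw [stirling2_eq]
  simp

lemma deriv_expm1 :
    PowerSeries.derivativeFun (PowerSeries.exp ℝ - 1) = PowerSeries.exp ℝ := by
  ext n
  change PowerSeries.coeff n (PowerSeries.derivative ℝ (PowerSeries.exp ℝ - 1)) = _
  rw [PowerSeries.coeff_derivative, map_sub, coeff_exp_real, coeff_exp_real,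
    PowerSeries.coeff_one, if_neg (Nat.succ_ne_zero n)]
  rw [Nat.factorial_succ]
  push_cast
  rw [mul_inv]
  field_simp
  ring

lemma coeff_rec (j k : ℕ) :
    PowerSeries.coeff (R := ℝ) (j + 1) ((PowerSeries.exp ℝ - 1) ^ (k + 1)) * (j + 1) =
      (k + 1) * (PowerSeries.coeff (R := ℝ) j ((PowerSeries.exp ℝ - 1) ^ (k + 1)) +
        PowerSeries.coeff (R := ℝ) j ((PowerSeries.exp ℝ - 1) ^ k)) := by
  have hD : PowerSeries.derivativeFun ((PowerSeries.exp ℝ - 1) ^ (k + 1)) =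
      (k + 1 : ℕ) • ((PowerSeries.exp ℝ - 1) ^ k * PowerSeries.exp ℝ) := by
    have := Derivation.leibniz_pow (PowerSeries.derivative ℝ) (a := PowerSeries.exp ℝ - 1) (k + 1)
    simp only [Nat.add_sub_cancel] at this
    rw [show PowerSeries.derivativeFun ((PowerSeries.exp ℝ - 1) ^ (k + 1)) =
      PowerSeries.derivative ℝ ((PowerSeries.exp ℝ - 1) ^ (k + 1)) from rfl, this]
    congr 1
    rw [smul_eq_mul, show PowerSeries.derivative ℝ (PowerSeries.exp ℝ - 1) =
      PowerSeries.derivativeFun (PowerSeries.exp ℝ - 1) from rfl, deriv_expm1]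
  have h1 : PowerSeries.coeff (R := ℝ) j (PowerSeries.derivativeFun ((PowerSeries.exp ℝ - 1) ^ (k + 1)))
      = PowerSeries.coeff (R := ℝ) (j + 1) ((PowerSeries.exp ℝ - 1) ^ (k + 1)) * (j + 1) := by
    change PowerSeries.coeff j (PowerSeries.derivative ℝ ((PowerSeries.exp ℝ - 1) ^ (k + 1))) = _
    rw [PowerSeries.coeff_derivative]
  have h2 : (PowerSeries.exp ℝ - 1) ^ k * PowerSeries.exp ℝ =
      (PowerSeries.exp ℝ - 1) ^ (k + 1) + (PowerSeries.exp ℝ - 1) ^ k := by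
    ring
  rw [← h1, hD, h2, map_nsmul, map_add, nsmul_eq_mul]
  push_cast
  ring

lemma stirling2_rec (j k : ℕ) :
    stirling2 (j + 1) (k + 1) = (k + 1) * stirling2 j (k + 1) + stirling2 j k := by
  have hj : ((j + 1).factorial : ℝ) = (j + 1) * j.factorial := by
    rw [Nat.factorial_succ]; push_cast; ring
  have hk : ((k + 1).factorial : ℝ) = (k + 1) * k.factorial := by
    rw [Nat.factorial_succ]; push_cast; ring
  have hrec := coeff_rec j k
  rw [stirling2_eq, stirling2_eq, stirling2_eq, hj, hk]
  have hjne : (0:ℝ) < (j:ℝ) + 1 := by positivity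
  have h : PowerSeries.coeff (j + 1) ((PowerSeries.exp ℝ - 1) ^ (k + 1)) =
      ((k:ℝ) + 1) * (PowerSeries.coeff j ((PowerSeries.exp ℝ - 1) ^ (k + 1)) +
        PowerSeries.coeff j ((PowerSeries.exp ℝ - 1) ^ k)) / ((j:ℝ) + 1) := by
    field_simp
    linarith [hrec]
  rw [h]
  have hkf : (k.factorial : ℝ) ≠ 0 := Nat.cast_ne_zero.mpr k.factorial_ne_zero
  field_simp

lemma sum_desc_stirling (j : ℕ) (x : ℝ) :
    ∑ k ∈ Finset.range (j + 1), (descPochhammer ℝ k).eval x * stirling2 j k = x ^ j := by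
  induction j with
  | zero =>
    simp [stirling2, descPochhammer]
  | succ j ih =>
    rw [Finset.sum_range_succ' _ (j + 1)]
    have h0 : (descPochhammer ℝ 0).eval x * stirling2 (j + 1) 0 = 0 := by
      rw [stirling2_succ_zero, mul_zero]
    rw [h0, add_zero]
    have hsplit : ∀ k ∈ Finset.range (j + 1),
        (descPochhammer ℝ (k + 1)).eval x * stirling2 (j + 1) (k + 1) =
        ((k : ℝ) + 1) * ((descPochhammer ℝ (k + 1)).eval x * stirling2 j (k + 1)) +
          (descPochhammer ℝ (k + 1)).eval x * stirling2 j k := by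
      intro k _
      rw [stirling2_rec]; ring
    rw [Finset.sum_congr rfl hsplit, Finset.sum_add_distrib]
    -- first sum: shift index
    have hshift : ∑ k ∈ Finset.range (j + 1),
        ((k : ℝ) + 1) * ((descPochhammer ℝ (k + 1)).eval x * stirling2 j (k + 1)) =
        ∑ k ∈ Finset.range (j + 1), (k : ℝ) * ((descPochhammer ℝ k).eval x * stirling2 j k) := by
      have := Finset.sum_range_succ' (fun k => (k : ℝ) * ((descPochhammer ℝ k).eval x * stirling2 j k)) (j + 1)
      rw [Finset.sum_range_succ _ (j + 1), stirling2_eq_zero_of_lt (Nat.lt_succ_self j)] at this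
      simp only [Nat.cast_zero, zero_mul, add_zero, mul_zero] at this
      push_cast at this ⊢
      linarith [this]
    rw [hshift, ← Finset.sum_add_distrib]
    have hterm : ∀ k ∈ Finset.range (j + 1),
        (k : ℝ) * ((descPochhammer ℝ k).eval x * stirling2 j k) +
          (descPochhammer ℝ (k + 1)).eval x * stirling2 j k =
        x * ((descPochhammer ℝ k).eval x * stirling2 j k) := by
      intro k _
      rw [descPochhammer_succ_right, Polynomial.eval_mul, Polynomial.eval_sub,
        Polynomial.eval_X, Polynomial.eval_natCast]
      ring
    rw [Finset.sum_congr rfl hterm, ← Finset.mul_sum, ih]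
    ring

theorem stmt7 (α : ℕ) (x y : ℝ) (n : ℕ) :
    bellEuler α x y n =
      ∑ j ∈ Finset.range (n + 1),
        (n.choose j : ℝ) *
          (∑ k ∈ Finset.range (j + 1), (descPochhammer ℝ k).eval x * stirling2 j k) *
          bellEuler α 0 y (n - j) := by
  have hre : eulerSeries α * expXT x * bellSeries y =
      expXT x * (eulerSeries α * bellSeries y) := by ring
  have hb0 : ∀ m : ℕ, bellEuler α 0 y m =
      m.factorial * PowerSeries.coeff m (eulerSeries α * bellSeries y) := by
    intro m
    rw [bellEuler, expXT_zero, mul_one]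
  rw [bellEuler, hre, PowerSeries.coeff_mul, Finset.Nat.sum_antidiagonal_eq_sum_range_succ_mk,
    Finset.mul_sum]
  refine Finset.sum_congr rfl fun j hj => ?_
  rw [Finset.mem_range, Nat.lt_succ_iff] at hj
  rw [sum_desc_stirling, hb0, coeff_expXT]
  have hfact : (n.factorial : ℝ) = (n.choose j : ℝ) * j.factorial * (n - j).factorial := by
    rw [← Nat.choose_mul_factorial_mul_factorial hj]
    push_cast
    ring
  rw [hfact]
  have hjf : (j.factorial : ℝ) ≠ 0 := Nat.cast_ne_zero.mpr j.factorial_ne_zero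
  field_simp
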